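/- Let X, Y be linearly independent vectors in a finite-dimensional vector space V over a field, and let P₁, P₂ be symmetric k-vectors (elements of Sym^k V) with X ⊙ P₂ = Y ⊙ P₁ (symmetric product). Then there exists a symmetric (k-1)-vector S with P₁ = X ⊙ S and P₂ = Y ⊙ S. -/

import Mathlib

open MvPolynomial

section Aux
variable {K : Type*} [Field K]

/-- A polynomial homogeneous of degree 0 is a constant. -/
lemma aux_homog_zero_eq_C {σ : Type*} {p : MvPolynomial σ K} (hp : p.IsHomogeneous 0) :
    p = C (coeff 0 p) := by
  classical
  ext d
  obtain rfl | hd := eq_or_ne d 0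
  · simp
  · rw [hp.coeff_eq_zero (mt (Finsupp.degree_eq_zero_iff d).mp hd)]
    rw [coeff_C, if_neg (Ne.symm hd)]

/-- Multiplication by a homogeneous polynomial shifts homogeneous components. -/
lemma aux_homogeneousComponent_mul {σ : Type*} {φ : MvPolynomial σ K} {m : ℕ}
    (hφ : φ.IsHomogeneous m) (S : MvPolynomial σ K) (d : ℕ) :
    homogeneousComponent (m + d) (φ * S) = φ * homogeneousComponent d S := by
  conv_lhs => rw [← sum_homogeneousComponent S, Finset.mul_sum, map_sum]
  have key : ∀ i, homogeneousComponent (m + d) (φ * homogeneousComponent i S)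
      = if i = d then φ * homogeneousComponent i S else 0 := by
    intro i
    rw [homogeneousComponent_of_mem (hφ.mul (homogeneousComponent_isHomogeneous i S))]
    simp [Nat.add_left_cancel_iff, eq_comm]
  rw [Finset.sum_congr rfl fun i _ => key i]
  rw [Finset.sum_ite_eq' (Finset.range (S.totalDegree + 1)) d
    (fun i => φ * homogeneousComponent i S)]
  by_cases hd : d ∈ Finset.range (S.totalDegree + 1)
  · rw [if_pos hd]
  · have hd' : S.totalDegree < d := by
      simp only [Finset.mem_range, Nat.lt_succ_iff, not_le] at hd; omega
    rw [if_neg hd, homogeneousComponent_eq_zero _ _ hd', mul_zero]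

/-- A cofactor of a homogeneous polynomial is homogeneous. -/
lemma aux_factor_homogeneous {σ : Type*} {φ S : MvPolynomial σ K} {m N : ℕ}
    (hφ : φ.IsHomogeneous m) (hφ0 : φ ≠ 0) (h : (φ * S).IsHomogeneous N) :
    S.IsHomogeneous (N - m) := by
  have hrep := (sum_homogeneousComponent S).symm
  rw [hrep]
  apply MvPolynomial.IsHomogeneous.sum
  intro i _
  by_cases hi : homogeneousComponent i S = 0
  · rw [hi]; exact isHomogeneous_zero _ _ _
  · have h1 : homogeneousComponent (m + i) (φ * S) = φ * homogeneousComponent i S :=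
      aux_homogeneousComponent_mul hφ S i
    have h2 : homogeneousComponent (m + i) (φ * S)
        = if m + i = N then φ * S else 0 := homogeneousComponent_of_mem h
    have hne : φ * homogeneousComponent i S ≠ 0 := mul_ne_zero hφ0 hi
    have : m + i = N := by
      by_contra hc
      rw [h2, if_neg hc] at h1
      exact hne h1.symm
    have : i = N - m := by omega
    rw [this]
    exact homogeneousComponent_isHomogeneous _ _
end Aux

/-- A nonzero homogeneous polynomial of degree 1 over a field is prime. -/
lemma aux_prime_of_homogeneous_one {K : Type*} [Field K] {n : ℕ}
    {X : MvPolynomial (Fin n) K} (hX : X.IsHomogeneous 1) (h0 : X ≠ 0) :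
    Prime X := by
  classical
  -- find a variable with nonzero coefficient
  obtain ⟨d, hd⟩ : ∃ d, d ∈ X.support := (support_nonempty.mpr h0).exists_mem
  have hdeg : d.degree = 1 := by
    have := hX (mem_support_iff.mp hd)
    rw [Finsupp.degree_eq_weight_one]; exact this
  obtain ⟨i, rfl⟩ : ∃ i, d = Finsupp.single i 1 := by
    have hd0 : d ≠ 0 := by
      intro h; rw [h] at hdeg; simp [map_zero] at hdeg
    obtain ⟨j, hj⟩ := Finsupp.support_nonempty_iff.mpr hd0
    refine ⟨j, ?_⟩
    have hsum : d j + ∑ x ∈ d.support.erase j, d x = 1 := by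
      rw [Finset.add_sum_erase _ _ hj]; exact hdeg
    have hj1 : 1 ≤ d j := Nat.one_le_iff_ne_zero.mpr (Finsupp.mem_support_iff.mp hj)
    have hrest : ∑ x ∈ d.support.erase j, d x = 0 := by omega
    ext x
    by_cases hx : x = j
    · subst hx; simp only [Finsupp.single_eq_same]; omega
    · rw [Finsupp.single_eq_of_ne' (Ne.symm hx)]
      by_cases hxs : x ∈ d.support
      · exact (Finset.sum_eq_zero_iff.mp hrest x (Finset.mem_erase.mpr ⟨hx, hxs⟩))
      · exact Finsupp.notMem_support_iff.mp hxs
  have hcoeff : coeff (Finsupp.single i 1) X ≠ 0 := mem_support_iff.mp hd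
  cases n with
  | zero => exact i.elim0
  | succ m =>
    set e : Fin (m + 1) ≃ Fin (m + 1) := Equiv.swap 0 i with he
    set X' : MvPolynomial (Fin (m + 1)) K := rename e X with hX'def
    have hXiff : Prime X ↔ Prime X' :=
      (MulEquiv.prime_iff (renameEquiv K e).toMulEquiv).symm
    rw [hXiff]
    have hX'h : X'.IsHomogeneous 1 := hX.rename_isHomogeneous
    have hc' : coeff (Finsupp.single (0 : Fin (m + 1)) 1) X' ≠ 0 := by
      have h1 := coeff_rename_mapDomain e e.injective X (Finsupp.single i 1)
      have h2 : Finsupp.mapDomain e (Finsupp.single i 1)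
          = Finsupp.single (0 : Fin (m + 1)) 1 := by
        rw [Finsupp.mapDomain_single, he]
        simp [Equiv.swap_apply_right]
      rw [h2] at h1
      rw [h1]; exact hcoeff
    set q := finSuccEquiv K m X' with hqdef
    have hq1 : q.natDegree ≤ 1 := by
      rw [hqdef, natDegree_finSuccEquiv]
      exact (degreeOf_le_totalDegree X' 0).trans hX'h.totalDegree_le
    have hqeq : q = Polynomial.C (q.coeff 1) * Polynomial.X + Polynomial.C (q.coeff 0) :=
      Polynomial.eq_X_add_C_of_natDegree_le_one hq1
    have ha1 : (q.coeff 1).IsHomogeneous 0 :=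
      hX'h.finSuccEquiv_coeff_isHomogeneous 1 0 rfl
    set k : K := coeff 0 (q.coeff 1) with hkdef
    have ha1C : q.coeff 1 = MvPolynomial.C k := aux_homog_zero_eq_C ha1
    have hcons : (Finsupp.cons 1 (0 : Fin m →₀ ℕ)) = Finsupp.single (0 : Fin (m + 1)) 1 := by
      ext j
      refine Fin.cases ?_ (fun j => ?_) j
      · simp
      · simp [Fin.succ_ne_zero, Finsupp.single_eq_of_ne (Ne.symm (Fin.succ_ne_zero j))]
    have hk0 : k ≠ 0 := by
      rw [hkdef, hqdef, finSuccEquiv_coeff_coeff, hcons]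
      exact hc'
    have hkunit : IsUnit (Polynomial.C (MvPolynomial.C k) :
        Polynomial (MvPolynomial (Fin m) K)) :=
      ((isUnit_iff_ne_zero.mpr hk0).map (MvPolynomial.C : K →+* MvPolynomial (Fin m) K)).map
        (Polynomial.C : MvPolynomial (Fin m) K →+* Polynomial (MvPolynomial (Fin m) K))
    set r : MvPolynomial (Fin m) K := -(MvPolynomial.C k⁻¹ * q.coeff 0) with hrdef
    have hassoc : Associated (Polynomial.X - Polynomial.C r) q := by
      refine ⟨hkunit.unit, ?_⟩
      rw [IsUnit.unit_spec]
      rw [hqeq, ha1C, hrdef]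
      rw [sub_mul, mul_comm, ← Polynomial.C_mul]
      have : -(MvPolynomial.C k⁻¹ * q.coeff 0) * MvPolynomial.C k = -(q.coeff 0) := by
        rw [neg_mul, mul_comm (MvPolynomial.C k⁻¹) (q.coeff 0), mul_assoc,
          ← MvPolynomial.C_mul, inv_mul_cancel₀ hk0, MvPolynomial.C_1, mul_one]
      rw [this, map_neg, sub_neg_eq_add]
    have hqprime : Prime q := hassoc.prime (Polynomial.prime_X_sub_C r)
    exact (MulEquiv.prime_iff (finSuccEquiv K m).toMulEquiv).mp hqprime

/-- Model `Sym V` for a finite-dimensional vector space `V` over a field of characteristic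
zero as the polynomial algebra `K[ξ₁,…,ξ_n]`, so that `Sym^k V` is the space of homogeneous
polynomials of degree `k` and the symmetric product `⊙` is polynomial multiplication.
If `X`, `Y` are linearly independent vectors (homogeneous of degree 1) and `P₁`, `P₂` are
symmetric `k`-vectors with `X ⊙ P₂ = Y ⊙ P₁`, then there is a symmetric `(k-1)`-vector `S`
with `P₁ = X ⊙ S` and `P₂ = Y ⊙ S`. -/
theorem stmt1 {K : Type*} [Field K] [CharZero K] {n k : ℕ}
    (X Y : MvPolynomial (Fin n) K)
    (hX : X.IsHomogeneous 1) (hY : Y.IsHomogeneous 1)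
    (hXY : LinearIndependent K ![X, Y])
    (P₁ P₂ : MvPolynomial (Fin n) K)
    (hP₁ : P₁.IsHomogeneous k) (hP₂ : P₂.IsHomogeneous k)
    (h : X * P₂ = Y * P₁) :
    ∃ S : MvPolynomial (Fin n) K, S.IsHomogeneous (k - 1) ∧ P₁ = X * S ∧ P₂ = Y * S := by
  have hpair := LinearIndependent.pair_iff.mp hXY
  have hX0 : X ≠ 0 := by
    intro h0
    obtain ⟨h1, -⟩ := hpair 1 0 (by simp [h0])
    exact one_ne_zero h1
  have hXprime : Prime X := aux_prime_of_homogeneous_one hX hX0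
  have hdvd : X ∣ Y * P₁ := ⟨P₂, h.symm⟩
  rcases hXprime.2.2 _ _ hdvd with hXdY | hXP
  · exfalso
    obtain ⟨S, hS⟩ := hXdY
    have hS0 : S.IsHomogeneous 0 := by
      have := aux_factor_homogeneous hX hX0 (N := 1) (by rwa [← hS])
      simpa using this
    have hSC : S = C (coeff 0 S) := aux_homog_zero_eq_C hS0
    rw [hSC] at hS
    have hlin : (coeff 0 S) • X + (-1 : K) • Y = 0 := by
      rw [smul_eq_C_mul, smul_eq_C_mul, hS, map_neg, map_one]
      ring
    obtain ⟨-, hbad⟩ := hpair _ _ hlin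
    exact absurd hbad (by norm_num)
  · obtain ⟨S, hS⟩ := hXP
    have hSh : S.IsHomogeneous (k - 1) :=
      aux_factor_homogeneous hX hX0 (N := k) (by rwa [← hS])
    refine ⟨S, hSh, hS, ?_⟩
    have h2 : X * P₂ = X * (Y * S) := by rw [h, hS]; ring
    exact mul_left_cancel₀ hX0 h2
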